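/- Let k be a field, m and n positive integers, A a commutative k-algebra, and X ∈ M_n(A) a matrix with X^m = 1. Let f(T) = ∏_{(ζ₁,…,ζ_n) ∈ μ_m(k̄)^n} (T − (ζ₁ + … + ζ_n)), a polynomial which lies in k[T] (being stable under Gal(k̄/k)). Then f(tr X) is nilpotent in A. Equivalently, f(tr X) lies in every prime ideal of A. -/

import Mathlib

open Polynomial

private lemma aux_lift (k K : Type*) [Field k] [Field K] [IsAlgClosed K] (ψ : k →+* K) :
    ∃ ι : AlgebraicClosure k →+* K, ι.comp (algebraMap k (AlgebraicClosure k)) = ψ := by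
  letI : Algebra k K := ψ.toAlgebra
  refine ⟨(IsAlgClosed.lift : AlgebraicClosure k →ₐ[k] K).toRingHom, ?_⟩
  ext x
  simpa [RingHom.algebraMap_toAlgebra] using
    (IsAlgClosed.lift : AlgebraicClosure k →ₐ[k] K).commutes x

private lemma aux_root {K : Type*} [Field K] {n m : ℕ} (Y : Matrix (Fin n) (Fin n) K)
    (hY : Y ^ m = 1) {r : K} (hr : (Matrix.charpoly Y).IsRoot r) : r ^ m = 1 := by
  have hdet : (Matrix.scalar (Fin n) r - Y).det = 0 := by
    have := hr
    rw [Polynomial.IsRoot, Matrix.charpoly, eval_det,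
      Matrix.matPolyEquiv_charmatrix] at this
    simpa using this
  obtain ⟨v, hv0, hv⟩ := (Matrix.exists_mulVec_eq_zero_iff).2 hdet
  have hYv : Y.mulVec v = r • v := by
    have := hv
    rw [Matrix.sub_mulVec] at this
    have h1 : (Matrix.scalar (Fin n) r).mulVec v = r • v := by
      funext i
      simp [Matrix.scalar, Matrix.mulVec_diagonal]
    have := sub_eq_zero.mp this
    rw [h1] at this
    exact this.symm
  have hpow : ∀ j : ℕ, (Y ^ j).mulVec v = r ^ j • v := by
    intro j
    induction j with
    | zero => simp [Matrix.one_mulVec]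
    | succ j ih =>
      rw [pow_succ, ← Matrix.mulVec_mulVec, hYv, Matrix.mulVec_smul, ih, smul_smul,
        ← pow_succ']
  have h := hpow m
  rw [hY, Matrix.one_mulVec] at h
  obtain ⟨i, hi⟩ := Function.ne_iff.mp hv0
  have : (r ^ m - 1) * v i = 0 := by
    have := congrFun h i
    simp only [Pi.smul_apply, smul_eq_mul] at this
    rw [sub_mul, one_mul, ← this, sub_self]
  have hvi : v i ≠ 0 := by simpa using hi
  exact sub_eq_zero.mp ((mul_eq_zero.mp this).resolve_right hvi)

/-- Let `k` be a field, `A` a commutative `k`-algebra and `X ∈ M_n(A)` with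
`X^m = 1`. If `f ∈ k[T]` is the polynomial whose image over the algebraic
closure `k̄` is `∏_{(ζ₁,…,ζ_n) ∈ μ_m(k̄)^n} (T − (ζ₁ + ⋯ + ζ_n))`, then
`f(tr X)` is nilpotent in `A` (equivalently, lies in every prime ideal of `A`). -/
theorem stmt_12 (k : Type*) [Field k] (m n : ℕ) (hm : 0 < m) (hn : 0 < n)
    (A : Type*) [CommRing A] [Algebra k A]
    (X : Matrix (Fin n) (Fin n) A) (hX : X ^ m = 1)
    (f : Polynomial k)
    (hf : f.map (algebraMap k (AlgebraicClosure k)) =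
      ∏ v : Fin n → (Polynomial.nthRootsFinset m (1 : AlgebraicClosure k)),
        (Polynomial.X - Polynomial.C (∑ i : Fin n, ((v i : AlgebraicClosure k))))) :
    IsNilpotent (Polynomial.aeval (Matrix.trace X) f) ∧
      ∀ P : Ideal A, P.IsPrime → Polynomial.aeval (Matrix.trace X) f ∈ P := by
  have key : ∀ P : Ideal A, P.IsPrime → Polynomial.aeval (Matrix.trace X) f ∈ P := by
    intro P hP
    letI := hP
    set B := A ⧸ P
    set F := FractionRing B
    set K := AlgebraicClosure F
    set φ : A →+* K :=
      ((algebraMap F K).comp (algebraMap B F)).comp (Ideal.Quotient.mk P) with hφ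
    -- it suffices to show φ (aeval (trace X) f) = 0
    suffices hz : φ (Polynomial.aeval (Matrix.trace X) f) = 0 by
      rw [hφ] at hz
      simp only [RingHom.comp_apply] at hz
      have hinj : Function.Injective ((algebraMap F K).comp (algebraMap B F)) :=
        (algebraMap F K).injective.comp (IsFractionRing.injective B F)
      have : Ideal.Quotient.mk P (Polynomial.aeval (Matrix.trace X) f) = 0 := by
        apply hinj
        simpa using hz
      exact (Ideal.Quotient.eq_zero_iff_mem).mp this
    set ψ : k →+* K := φ.comp (algebraMap k A) with hψ
    obtain ⟨ι, hι⟩ := aux_lift k K ψ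
    set Y : Matrix (Fin n) (Fin n) K := φ.mapMatrix X with hY
    have hYm : Y ^ m = 1 := by
      rw [hY, ← map_pow, hX, map_one]
    have htr : φ (Matrix.trace X) = Matrix.trace Y := by
      simp [Matrix.trace, Matrix.diag, map_sum, hY]
    -- rewrite aeval through φ
    have heval : φ (Polynomial.aeval (Matrix.trace X) f) =
        Polynomial.eval (Matrix.trace Y) (f.map ψ) := by
      rw [Polynomial.aeval_def, Polynomial.hom_eval₂, ← hψ, htr, Polynomial.eval_map]
    rw [heval]
    have hmap : f.map ψ = (f.map (algebraMap k (AlgebraicClosure k))).map ι := by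
      rw [Polynomial.map_map, hι]
    rw [hmap, hf, Polynomial.map_prod]
    simp only [Polynomial.map_sub, Polynomial.map_X, Polynomial.map_C]
    rw [Polynomial.eval_prod]
    -- trace Y is the sum of the roots of the charpoly
    have htrY : Matrix.trace Y = (Matrix.charpoly Y).roots.sum :=
      Matrix.trace_eq_sum_roots_charpoly Y
    -- the roots of the charpoly: card n, each an m-th root of unity
    set l : List K := (Matrix.charpoly Y).roots.toList with hl
    have hlen : l.length = n := by
      rw [hl, Multiset.length_toList]
      have hs : (Matrix.charpoly Y).Splits :=
        IsAlgClosed.splits _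
      rw [(Polynomial.splits_iff_card_roots).mp hs, Matrix.charpoly_natDegree_eq_dim,
        Fintype.card_fin]
    have hmem : ∀ j : Fin l.length, ∃ α : Polynomial.nthRootsFinset m (1 : AlgebraicClosure k),
        ι α = l.get j := by
      intro j
      have hrmem : l.get j ∈ (Matrix.charpoly Y).roots := by
        have := List.get_mem l j
        exact (Multiset.mem_toList).mp this
      have hroot : (Matrix.charpoly Y).IsRoot (l.get j) :=
        Polynomial.isRoot_of_mem_roots hrmem
      have hrm : (l.get j) ^ m = 1 := aux_root Y hYm hroot
      -- lift this root of unity to the algebraic closure of k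
      set q : Polynomial (AlgebraicClosure k) := Polynomial.X ^ m - Polynomial.C 1 with hq
      have hq0 : q ≠ 0 := Polynomial.X_pow_sub_C_ne_zero hm 1
      have hqs : q.Splits := IsAlgClosed.splits _
      have hrin : l.get j ∈ (q.map ι).roots := by
        rw [Polynomial.mem_roots']
        refine ⟨(Polynomial.map_ne_zero_iff ι.injective).mpr hq0, ?_⟩
        simp only [List.get_eq_getElem] at hrm
        simp [hq, Polynomial.IsRoot, sub_eq_zero, hrm]
      rw [hqs.roots_map ι, Multiset.mem_map] at hrin
      obtain ⟨α, hα, hαeq⟩ := hrin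
      refine ⟨⟨α, ?_⟩, hαeq⟩
      rw [Polynomial.mem_nthRootsFinset hm]
      have := Polynomial.isRoot_of_mem_roots hα
      simp only [hq, Polynomial.IsRoot, Polynomial.eval_sub, Polynomial.eval_pow,
        Polynomial.eval_X, Polynomial.eval_C] at this
      exact sub_eq_zero.mp this
    choose w hw using hmem
    set v : Fin n → Polynomial.nthRootsFinset m (1 : AlgebraicClosure k) :=
      fun i => w (Fin.cast hlen.symm i) with hv
    apply Finset.prod_eq_zero (Finset.mem_univ v)
    simp only [Polynomial.eval_sub, Polynomial.eval_X, Polynomial.eval_C]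
    have hsum : Matrix.trace Y = ι (∑ i : Fin n, ((v i : AlgebraicClosure k))) := by
      rw [map_sum, htrY, ← Multiset.sum_toList, ← hl, ← Fin.sum_univ_getElem]
      refine Finset.sum_equiv (finCongr hlen) (by simp) ?_
      intro i _
      have := hw (Fin.cast hlen.symm (finCongr hlen i))
      simp only [List.get_eq_getElem] at this
      simpa [hv] using this.symm
    rw [hsum, sub_self]
  refine ⟨?_, key⟩
  have : Polynomial.aeval (Matrix.trace X) f ∈ nilradical A := by
    rw [nilradical_eq_sInf]
    rw [Submodule.mem_sInf]
    intro P hP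
    exact key P hP
  exact this
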